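/- Lower bound for the maximum cost objective: let n = 2 and let A be the multiset {−1, −1, 1, 1}. For every deterministic strategyproof mechanism f and every δ > 0, there exists a location profile x ∈ ℝ^2 with mc(OPT, x) > 0 and mc(f(x), x) > (3 − δ) · mc(OPT, x), where mc(OPT, x) = min over feasible outcomes y of mc(y, x). Hence no deterministic strategyproof mechanism achieves approximation ratio 3 − δ for any δ > 0 under the maximum cost objective. -/

import Mathlib

/-- Max-variant cost of an agent at `t` for two facilities at `y = (y₁, y₂)`. -/
noncomputable def cost (y : ℝ × ℝ) (t : ℝ) : ℝ := max |y.1 - t| |y.2 - t|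

/-- Feasible outcomes for the alternative multiset `A = {-1, -1, 1, 1}`: each of the
two facilities is placed at a distinct copy, so each coordinate is `-1` or `1`. -/
def Feas (y : ℝ × ℝ) : Prop := (y.1 = -1 ∨ y.1 = 1) ∧ (y.2 = -1 ∨ y.2 = 1)

/-- Maximum cost for two agents. -/
noncomputable def mc2 (y : ℝ × ℝ) (x : Fin 2 → ℝ) : ℝ :=
  max (cost y (x 0)) (cost y (x 1))

lemma costN (t : ℝ) : cost (-1, -1) t = |1 + t| := by
  show max |(-1 : ℝ) - t| |(-1 : ℝ) - t| = |1 + t|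
  rw [max_self, show (-1 : ℝ) - t = -(1 + t) by ring, abs_neg]

lemma costP (t : ℝ) : cost (1, 1) t = |1 - t| := by
  show max |(1 : ℝ) - t| |(1 : ℝ) - t| = |1 - t|
  rw [max_self]

lemma force_neg (y : ℝ × ℝ) (hy : Feas y) (t : ℝ) (ht : 0 < t)
    (h : cost y (-t) < 1 + t) : y = (-1, -1) := by
  obtain ⟨a, b⟩ := y
  obtain ⟨h1, h2⟩ := hy
  simp only at h1 h2
  have k1 : a = -1 := by
    rcases h1 with h' | h'
    · exact h'
    · exfalso
      subst h'
      have hle : |(1 : ℝ) - (-t)| ≤ cost (1, b) (-t) := le_max_left _ _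
      rw [show (1 : ℝ) - (-t) = 1 + t by ring, abs_of_pos (by linarith)] at hle
      linarith
  have k2 : b = -1 := by
    rcases h2 with h' | h'
    · exact h'
    · exfalso
      subst h'
      have hle : |(1 : ℝ) - (-t)| ≤ cost (a, 1) (-t) := le_max_right _ _
      rw [show (1 : ℝ) - (-t) = 1 + t by ring, abs_of_pos (by linarith)] at hle
      linarith
  rw [k1, k2]

lemma force_pos (y : ℝ × ℝ) (hy : Feas y) (t : ℝ) (ht : 0 < t)
    (h : cost y t < 1 + t) : y = (1, 1) := by
  obtain ⟨a, b⟩ := y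
  obtain ⟨h1, h2⟩ := hy
  simp only at h1 h2
  have k1 : a = 1 := by
    rcases h1 with h' | h'
    · exfalso
      subst h'
      have hle : |(-1 : ℝ) - t| ≤ cost (-1, b) t := le_max_left _ _
      rw [show (-1 : ℝ) - t = -(1 + t) by ring, abs_neg, abs_of_pos (by linarith)] at hle
      linarith
    · exact h'
  have k2 : b = 1 := by
    rcases h2 with h' | h'
    · exfalso
      subst h'
      have hle : |(-1 : ℝ) - t| ≤ cost (a, -1) t := le_max_right _ _
      rw [show (-1 : ℝ) - t = -(1 + t) by ring, abs_neg, abs_of_pos (by linarith)] at hle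
      linarith
    · exact h'
  rw [k1, k2]

lemma big_neg (y : ℝ × ℝ) (hy : Feas y) (hne : y ≠ (-1, -1)) : 3 ≤ cost y (-2) := by
  obtain ⟨a, b⟩ := y
  obtain ⟨h1, h2⟩ := hy
  simp only at h1 h2
  have : a = 1 ∨ b = 1 := by
    rcases h1 with h' | h'
    · rcases h2 with h'' | h''
      · exact absurd (by rw [h', h'']) hne
      · exact Or.inr h''
    · exact Or.inl h'
  rcases this with h' | h'
  · subst h'
    have hle : |(1 : ℝ) - (-2 : ℝ)| ≤ cost (1, b) (-2) := le_max_left _ _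
    norm_num at hle
    exact hle
  · subst h'
    have hle : |(1 : ℝ) - (-2 : ℝ)| ≤ cost (a, 1) (-2) := le_max_right _ _
    norm_num at hle
    exact hle

lemma big_pos (y : ℝ × ℝ) (hy : Feas y) (hne : y ≠ (1, 1)) : 3 ≤ cost y 2 := by
  obtain ⟨a, b⟩ := y
  obtain ⟨h1, h2⟩ := hy
  simp only at h1 h2
  have : a = -1 ∨ b = -1 := by
    rcases h1 with h' | h'
    · exact Or.inl h'
    · rcases h2 with h'' | h''
      · exact Or.inr h''
      · exact absurd (by rw [h', h'']) hne
  rcases this with h' | h'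
  · subst h'
    have hle : |(-1 : ℝ) - (2 : ℝ)| ≤ cost (-1, b) 2 := le_max_left _ _
    norm_num at hle
    exact hle
  · subst h'
    have hle : |(-1 : ℝ) - (2 : ℝ)| ≤ cost (a, -1) 2 := le_max_right _ _
    norm_num at hle
    exact hle

theorem stmt_10 (f : (Fin 2 → ℝ) → ℝ × ℝ)
    (hfeas : ∀ x : Fin 2 → ℝ, Feas (f x))
    (hsp : ∀ (x : Fin 2 → ℝ) (i : Fin 2) (x' : ℝ),
      cost (f x) (x i) ≤ cost (f (Function.update x i x')) (x i))
    (δ : ℝ) (hδ : 0 < δ) :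
    ∃ x : Fin 2 → ℝ, ∃ yo : ℝ × ℝ, Feas yo ∧
      (∀ y : ℝ × ℝ, Feas y → mc2 yo x ≤ mc2 y x) ∧
      0 < mc2 yo x ∧ (3 - δ) * mc2 yo x < mc2 (f x) x := by
  set ε : ℝ := min δ 1 / 4 with hεdef
  have hε0 : 0 < ε := by
    have : 0 < min δ 1 := lt_min hδ one_pos
    positivity
  have hεδ : ε ≤ δ / 4 := by
    have : min δ 1 ≤ δ := min_le_left _ _
    rw [hεdef]; linarith
  have hε1 : ε ≤ 1 / 4 := by
    have : min δ 1 ≤ 1 := min_le_right _ _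
    rw [hεdef]; linarith
  have key : (3 - δ) * (1 + ε) < 3 := by nlinarith [mul_pos hδ hε0]
  by_cases h1 : f ![ε, -2] = (-1, -1)
  · -- f(ε, -2) = (-1,-1); SP forces f(ε,-ε) = (-1,-1)
    have h2 : f ![ε, -ε] = (-1, -1) := by
      have hupd : Function.update ![ε, -ε] (1 : Fin 2) (-2) = ![ε, -2] := by
        funext i; fin_cases i <;> simp [Function.update]
      have hs := hsp ![ε, -ε] 1 (-2)
      rw [hupd, h1] at hs
      have hx1 : (![ε, -ε] : Fin 2 → ℝ) 1 = -ε := by simp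
      rw [hx1, costN] at hs
      rw [show (1 : ℝ) + -ε = 1 - ε by ring, abs_of_pos (by linarith)] at hs
      exact force_neg _ (hfeas _) ε hε0 (by linarith)
    by_cases h3 : f ![2, -ε] = (1, 1)
    · -- SP forces f(ε,-ε) = (1,1), contradiction
      exfalso
      have hupd : Function.update ![ε, -ε] (0 : Fin 2) 2 = ![2, -ε] := by
        funext i; fin_cases i <;> simp [Function.update]
      have hs := hsp ![ε, -ε] 0 2
      rw [hupd, h3] at hs
      have hx0 : (![ε, -ε] : Fin 2 → ℝ) 0 = ε := by simp
      rw [hx0, costP, abs_of_pos (by linarith)] at hs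
      have h4 : f ![ε, -ε] = (1, 1) := force_pos _ (hfeas _) ε hε0 (by linarith)
      rw [h2] at h4
      exact absurd h4 (by norm_num [Prod.ext_iff])
    · -- bad profile (2, -ε) with OPT = (1,1)
      refine ⟨![2, -ε], (1, 1), ⟨Or.inr rfl, Or.inr rfl⟩, ?_, ?_, ?_⟩
      · intro y hy
        have hm : mc2 (1, 1) ![2, -ε] = 1 + ε := by
          simp only [mc2, Matrix.cons_val_zero, Matrix.cons_val_one, Matrix.head_cons, costP]
          rw [show (1 : ℝ) - 2 = -1 by ring, show (1 : ℝ) - -ε = 1 + ε by ring,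
            abs_neg, abs_one, abs_of_pos (by linarith)]
          exact max_eq_right (by linarith)
        rw [hm]
        by_cases hyP : y = (1, 1)
        · rw [hyP, hm]
        · have h3le : 3 ≤ cost y 2 := big_pos y hy hyP
          have : cost y ((![2, -ε] : Fin 2 → ℝ) 0) ≤ mc2 y ![2, -ε] := le_max_left _ _
          simp only [Matrix.cons_val_zero] at this
          linarith
      · have hm : mc2 (1, 1) ![2, -ε] = 1 + ε := by
          simp only [mc2, Matrix.cons_val_zero, Matrix.cons_val_one, Matrix.head_cons, costP]
          rw [show (1 : ℝ) - 2 = -1 by ring, show (1 : ℝ) - -ε = 1 + ε by ring,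
            abs_neg, abs_one, abs_of_pos (by linarith)]
          exact max_eq_right (by linarith)
        rw [hm]; linarith
      · have hm : mc2 (1, 1) ![2, -ε] = 1 + ε := by
          simp only [mc2, Matrix.cons_val_zero, Matrix.cons_val_one, Matrix.head_cons, costP]
          rw [show (1 : ℝ) - 2 = -1 by ring, show (1 : ℝ) - -ε = 1 + ε by ring,
            abs_neg, abs_one, abs_of_pos (by linarith)]
          exact max_eq_right (by linarith)
        rw [hm]
        have h3le : 3 ≤ cost (f ![2, -ε]) 2 := big_pos _ (hfeas _) h3
        have hle : cost (f ![2, -ε]) ((![2, -ε] : Fin 2 → ℝ) 0) ≤ mc2 (f ![2, -ε]) ![2, -ε] :=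
          le_max_left _ _
        simp only [Matrix.cons_val_zero] at hle
        nlinarith [mul_pos hδ hε0]
  · -- bad profile (ε, -2) with OPT = (-1,-1)
    refine ⟨![ε, -2], (-1, -1), ⟨Or.inl rfl, Or.inl rfl⟩, ?_, ?_, ?_⟩
    all_goals
      have hm : mc2 (-1, -1) ![ε, -2] = 1 + ε := by
        simp only [mc2, Matrix.cons_val_zero, Matrix.cons_val_one, Matrix.head_cons, costN]
        rw [show (1 : ℝ) + -2 = -1 by ring, abs_neg, abs_one, abs_of_pos (by linarith)]
        exact max_eq_left (by linarith)
    · intro y hy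
      rw [hm]
      by_cases hyN : y = (-1, -1)
      · rw [hyN, hm]
      · have h3le : 3 ≤ cost y (-2) := big_neg y hy hyN
        have : cost y ((![ε, -2] : Fin 2 → ℝ) 1) ≤ mc2 y ![ε, -2] := le_max_right _ _
        simp only [Matrix.cons_val_one, Matrix.head_cons, Matrix.cons_val_zero] at this
        linarith
    · rw [hm]; linarith
    · rw [hm]
      have h3le : 3 ≤ cost (f ![ε, -2]) (-2) := big_neg _ (hfeas _) h1
      have hle : cost (f ![ε, -2]) ((![ε, -2] : Fin 2 → ℝ) 1) ≤ mc2 (f ![ε, -2]) ![ε, -2] :=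
        le_max_right _ _
      simp only [Matrix.cons_val_one, Matrix.head_cons, Matrix.cons_val_zero] at hle
      nlinarith [mul_pos hδ hε0]
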